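/- arXiv:2310.17759 — 5 statements merged into one kernel-verified Lean document; each statement's English description precedes it below -/
import Mathlib

section
/- Let E be a real Hilbert space, f : E → ℝ be ℓ-smooth and μ-strongly convex with 0 < μ ≤ ℓ, and let g : E → E satisfy ‖g(x) − ∇f(x)‖ ≤ δ for all x ∈ E, where δ ≥ 0. Then for all x, y ∈ E: (μ/4)‖x − y‖² ≤ f(y) − ( f(x) − δ²/μ + ⟪g(x), y − x⟫ ) ≤ ℓ‖x − y‖² + (1/(2ℓ) + 1/μ)·δ². -/
open RealInnerProductSpace

section Aux

variable {E : Type*} [NormedAddCommGroup E] [InnerProductSpace ℝ E] [CompleteSpace E]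

private lemma line_deriv (x v : E) (t : ℝ) : HasDerivAt (fun t : ℝ => x + t • v) v t := by
  simpa using ((hasDerivAt_id t).smul_const v).const_add x

private lemma comp_line_deriv (f : E → ℝ) (hfdiff : Differentiable ℝ f) (x v : E) (t : ℝ) :
    HasDerivAt (fun t : ℝ => f (x + t • v)) ⟪gradient f (x + t • v), v⟫ t := by
  have h1 : HasFDerivAt f ((InnerProductSpace.toDual ℝ E) (gradient f (x + t • v))) (x + t • v) :=
    (hfdiff (x + t • v)).hasGradientAt.hasFDerivAt
  have h2 := h1.comp_hasDerivAt t (line_deriv x v t)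
  rw [InnerProductSpace.toDual_apply_apply] at h2
  exact h2

/-- Descent lemma: `f y ≤ f x + ⟪∇f x, y - x⟫ + ℓ/2 ‖y-x‖²`. -/
private lemma descent_lemma (f : E → ℝ) (ℓ : ℝ)
    (hfdiff : Differentiable ℝ f)
    (hsmooth : ∀ a b : E, ‖gradient f a - gradient f b‖ ≤ ℓ * ‖a - b‖)
    (x y : E) :
    f y ≤ f x + ⟪gradient f x, y - x⟫ + ℓ / 2 * ‖y - x‖ ^ 2 := by
  set v := y - x with hv
  set ψ : ℝ → ℝ := fun t => f (x + t • v) - t * ⟪gradient f x, v⟫ - ℓ * ‖v‖ ^ 2 / 2 * t ^ 2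
    with hψdef
  have hψ : ∀ t : ℝ, HasDerivAt ψ
      (⟪gradient f (x + t • v), v⟫ - ⟪gradient f x, v⟫ - ℓ * ‖v‖ ^ 2 * t) t := by
    intro t
    have h1 := (comp_line_deriv f hfdiff x v t).sub
      ((hasDerivAt_id t).mul_const (⟪gradient f x, v⟫ : ℝ))
    have h2 : HasDerivAt (fun t : ℝ => ℓ * ‖v‖ ^ 2 / 2 * t ^ 2) (ℓ * ‖v‖ ^ 2 * t) t := by
      have := (hasDerivAt_pow 2 t).const_mul (ℓ * ‖v‖ ^ 2 / 2)
      exact this.congr_deriv (by ring)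
    have := h1.sub h2
    exact this.congr_deriv (by ring)
  have hmono : AntitoneOn ψ (Set.Icc (0 : ℝ) 1) := by
    apply antitoneOn_of_deriv_nonpos (convex_Icc 0 1)
    · exact fun t _ => (hψ t).continuousAt.continuousWithinAt
    · exact fun t _ => (hψ t).differentiableAt.differentiableWithinAt
    · intro t ht
      rw [interior_Icc] at ht
      rw [(hψ t).deriv]
      have hCS : ⟪gradient f (x + t • v) - gradient f x, v⟫ ≤
          ‖gradient f (x + t • v) - gradient f x‖ * ‖v‖ := real_inner_le_norm _ _
      have hlip : ‖gradient f (x + t • v) - gradient f x‖ ≤ ℓ * ‖(x + t • v) - x‖ :=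
        hsmooth _ _
      have hnorm : ‖(x + t • v) - x‖ = t * ‖v‖ := by
        simp [norm_smul, abs_of_nonneg ht.1.le]
      rw [hnorm] at hlip
      have hv0 : (0:ℝ) ≤ ‖v‖ := norm_nonneg v
      have := hCS.trans (mul_le_mul_of_nonneg_right hlip hv0)
      rw [inner_sub_left] at this
      nlinarith
  have h01 := hmono (Set.mem_Icc.2 ⟨le_refl 0, zero_le_one⟩)
      (Set.mem_Icc.2 ⟨zero_le_one, le_refl 1⟩) zero_le_one
  have hy : x + (1:ℝ) • v = y := by simp [hv]
  simp only [hψdef, hy, zero_smul, add_zero, one_pow, zero_pow, one_mul, zero_mul,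
    mul_zero, sub_zero] at h01
  linarith

/-- First-order lower bound from `μ`-strong convexity. -/
private lemma strong_convex_lower (f : E → ℝ) (μ : ℝ)
    (hfdiff : Differentiable ℝ f)
    (hsc : ConvexOn ℝ Set.univ (fun x => f x - μ / 2 * ‖x‖ ^ 2))
    (x y : E) :
    f x + ⟪gradient f x, y - x⟫ + μ / 2 * ‖y - x‖ ^ 2 ≤ f y := by
  set v := y - x with hv
  set h : E → ℝ := fun z => f z - μ / 2 * ‖z‖ ^ 2 with hh
  set ψ : ℝ → ℝ := fun t => h (x + t • v) with hψdef
  have hconv : ConvexOn ℝ Set.univ ψ := by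
    have := hsc.comp_affineMap (AffineMap.lineMap x y)
    rw [Set.preimage_univ] at this
    have he : (h ∘ (AffineMap.lineMap x y) : ℝ → ℝ) = ψ := by
      funext t
      simp [hψdef, AffineMap.lineMap_apply, hv, add_comm]
    rwa [he] at this
  have hd : HasDerivAt ψ (⟪gradient f x, v⟫ - μ / 2 * (⟪x, v⟫ + ⟪v, x⟫)) 0 := by
    have h1 := comp_line_deriv f hfdiff x v 0
    simp only [zero_smul, add_zero] at h1
    have h2 : HasDerivAt (fun t : ℝ => ⟪x + t • v, x + t • v⟫) (⟪x, v⟫ + ⟪v, x⟫) 0 := by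
      have := HasDerivAt.inner ℝ (line_deriv x v 0) (line_deriv x v 0)
      simpa using this
    have h3 : HasDerivAt (fun t : ℝ => μ / 2 * ⟪x + t • v, x + t • v⟫)
        (μ / 2 * (⟪x, v⟫ + ⟪v, x⟫)) 0 := h2.const_mul (μ / 2)
    have := h1.sub h3
    have hfun : ψ = (fun t : ℝ => f (x + t • v)) - fun t : ℝ => μ / 2 * ⟪x + t • v, x + t • v⟫ := by
      funext t
      simp [hψdef, hh, real_inner_self_eq_norm_sq]
    rw [hfun]
    exact this
  have hslope := hconv.le_slope_of_hasDerivAt (Set.mem_univ 0) (Set.mem_univ 1)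
    zero_lt_one hd
  rw [slope_def_field] at hslope
  have hψ1 : ψ 1 = f y - μ / 2 * ‖y‖ ^ 2 := by simp [hψdef, hh, hv]
  have hψ0 : ψ 0 = f x - μ / 2 * ‖x‖ ^ 2 := by simp [hψdef, hh]
  have hy2 : ‖y‖ ^ 2 = ‖x‖ ^ 2 + 2 * ⟪x, v⟫ + ‖v‖ ^ 2 := by
    have : y = x + v := by simp [hv]
    rw [this, norm_add_sq_real]
  have hsym : ⟪v, x⟫ = ⟪x, v⟫ := real_inner_comm x v
  rw [hψ1, hψ0] at hslope
  norm_num at hslope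
  have hy2' : μ / 2 * ‖y‖ ^ 2 = μ / 2 * ‖x‖ ^ 2 + μ * ⟪x, v⟫ + μ / 2 * ‖v‖ ^ 2 := by
    rw [hy2]; ring
  have hsym' : μ / 2 * (⟪x, v⟫ + ⟪v, x⟫) = μ * ⟪x, v⟫ := by rw [hsym]; ring
  linarith [hslope, hy2', hsym', (hfdiff x).hasGradientAt.fderiv_apply (y := v)]

end Aux

/-- Lemma A.3, first part.
Let `E` be a real Hilbert space, `f : E → ℝ` be `ℓ`-smooth and `μ`-strongly convex with
`0 < μ ≤ ℓ`, and let `g : E → E` satisfy `‖g x − ∇f x‖ ≤ δ` for all `x`, where `δ ≥ 0`.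
Then for all `x, y`:
`(μ/4)‖x − y‖² ≤ f y − (f x − δ²/μ + ⟪g x, y − x⟫) ≤ ℓ‖x − y‖² + (1/(2ℓ) + 1/μ)·δ²`. -/
theorem inexact_oracle_transformation
    {E : Type*} [NormedAddCommGroup E] [InnerProductSpace ℝ E] [CompleteSpace E]
    (f : E → ℝ) (ℓ μ δ : ℝ) (hμ : 0 < μ) (hμℓ : μ ≤ ℓ) (hδ : 0 ≤ δ)
    (hfdiff : Differentiable ℝ f)
    (hsmooth : ∀ a b : E, ‖gradient f a - gradient f b‖ ≤ ℓ * ‖a - b‖)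
    (hsc : ConvexOn ℝ Set.univ (fun x => f x - μ / 2 * ‖x‖ ^ 2))
    (g : E → E) (hg : ∀ x : E, ‖g x - gradient f x‖ ≤ δ)
    (x y : E) :
    μ / 4 * ‖x - y‖ ^ 2 ≤ f y - (f x - δ ^ 2 / μ + ⟪g x, y - x⟫) ∧
    f y - (f x - δ ^ 2 / μ + ⟪g x, y - x⟫) ≤ ℓ * ‖x - y‖ ^ 2 + (1 / (2 * ℓ) + 1 / μ) * δ ^ 2 := by
  have hℓ : (0:ℝ) < ℓ := lt_of_lt_of_le hμ hμℓ
  have hup := descent_lemma f ℓ hfdiff hsmooth x y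
  have hlo := strong_convex_lower f μ hfdiff hsc x y
  set v := y - x with hv
  set r := ‖v‖ with hr
  have hrxy : ‖x - y‖ = r := by rw [hr, hv, norm_sub_rev]
  have hsplit : ⟪g x, v⟫ = ⟪gradient f x, v⟫ + ⟪g x - gradient f x, v⟫ := by
    rw [inner_sub_left]; ring
  have habs : |⟪g x - gradient f x, v⟫| ≤ δ * r := by
    refine (abs_real_inner_le_norm _ _).trans ?_
    exact mul_le_mul_of_nonneg_right (hg x) (norm_nonneg v)
  have habs1 : ⟪g x - gradient f x, v⟫ ≤ δ * r := (abs_le.1 habs).2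
  have habs2 : -(δ * r) ≤ ⟪g x - gradient f x, v⟫ := (abs_le.1 habs).1
  have hr0 : (0:ℝ) ≤ r := norm_nonneg v
  have e1 : δ ^ 2 / μ * μ = δ ^ 2 := div_mul_cancel₀ _ (ne_of_gt hμ)
  have e2 : (1 / (2 * ℓ) + 1 / μ) * δ ^ 2 = δ ^ 2 / (2 * ℓ) + δ ^ 2 / μ := by
    field_simp
  have e3 : δ ^ 2 / (2 * ℓ) * (2 * ℓ) = δ ^ 2 := by
    field_simp
  rw [hrxy]
  constructor
  · nlinarith [sq_nonneg (μ * r - 2 * δ), hμ, hlo, habs1, e1, hr0]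
  · rw [e2]
    nlinarith [sq_nonneg (ℓ * r - δ), hℓ, hup, habs2, e3, hr0]
end

section
/- Let E be a real Hilbert space, X ⊆ E a nonempty closed convex set, and F : E → ℝ a differentiable function that is convex on X. Let ε > 0, δ ≥ 0, D > 0, and let x* ∈ X minimize F over X. Let x₀, x₀' ∈ X satisfy ‖x* − x₀‖ ≤ D and ‖x₀ − x₀'‖ ≤ δ. Set r = ε/D² and ε_r = (ε/2)·min{1, δ²/(4D²)}. Define F_r(x) = F(x) + (r/2)‖x − x₀‖² and F_r'(x) = F(x) + (r/2)‖x − x₀'‖², and let x_r, x_r' ∈ X satisfy F_r(x_r) − inf_{x∈X} F_r(x) ≤ ε_r and F_r'(x_r') − inf_{x∈X} F_r'(x) ≤ ε_r. Then F(x_r) − F(x*) ≤ ε and ‖x_r − x_r'‖² ≤ 4δ². -/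
open RealInnerProductSpace Filter Topology

section Aux

variable {E : Type*} [NormedAddCommGroup E] [InnerProductSpace ℝ E]

private lemma aux_norm_combo_sq (a b : E) (t : ℝ) :
    ‖(1 - t) • a + t • b‖ ^ 2
      = (1 - t) * ‖a‖ ^ 2 + t * ‖b‖ ^ 2 - t * (1 - t) * ‖a - b‖ ^ 2 := by
  have h1 : ‖(1 - t) • a + t • b‖ ^ 2
      = ‖(1-t)•a‖^2 + 2 * ⟪(1-t)•a, t•b⟫ + ‖t•b‖^2 := by
    rw [← norm_add_sq_real]
  have h2 : ‖a - b‖^2 = ‖a‖^2 - 2*⟪a,b⟫ + ‖b‖^2 := norm_sub_sq_real a b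
  rw [h1, real_inner_smul_left, real_inner_smul_right, norm_smul, norm_smul]
  simp [mul_pow]
  nlinarith [sq_abs (1-t), sq_abs t, sq_nonneg (1-t)]

private lemma aux_inner_ident (z z' c c' : E) :
    ‖z' - c‖^2 - ‖z - c‖^2 + ‖z - c'‖^2 - ‖z' - c'‖^2 = 2 * ⟪z' - z, c' - c⟫ := by
  simp only [norm_sub_sq_real, inner_sub_left, inner_sub_right]
  ring

private lemma aux_exists_minOn [CompleteSpace E]
    (X : Set E) (hXne : X.Nonempty) (hXcl : IsClosed X)
    (G : E → ℝ) (hGc : Continuous G) (K : ℝ) (hK : 0 < K)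
    (hmidmem : ∀ x ∈ X, ∀ y ∈ X, (1/2 : ℝ) • x + (1/2 : ℝ) • y ∈ X)
    (hsc : ∀ x ∈ X, ∀ y ∈ X,
      G ((1/2 : ℝ) • x + (1/2 : ℝ) • y) ≤ G x / 2 + G y / 2 - K * ‖x - y‖ ^ 2)
    (hlb : BddBelow (G '' X)) :
    ∃ z ∈ X, ∀ x ∈ X, G z ≤ G x := by
  set m := sInf (G '' X) with hm
  have hne : (G '' X).Nonempty := hXne.image _
  obtain ⟨u, hmono, hlim, hmem⟩ := exists_seq_tendsto_sInf hne hlb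
  choose xseq hxseqX hxseqval using fun n => (hmem n : u n ∈ G '' X)
  have hle : ∀ x ∈ X, m ≤ G x := fun x hx => csInf_le hlb ⟨x, hx, rfl⟩
  have hcauchy : CauchySeq xseq := by
    rw [Metric.cauchySeq_iff]
    intro ε hε
    have : ∀ᶠ n in atTop, u n < m + K * ε ^ 2 :=
      hlim.eventually_lt_const (by rw [← hm]; nlinarith [mul_pos hK (pow_pos hε 2)])
    obtain ⟨N, hN⟩ := this.exists_forall_of_atTop
    refine ⟨N, fun n hn k hk => ?_⟩
    have h1 := hsc _ (hxseqX n) _ (hxseqX k)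
    have h2 := hle _ (hmidmem _ (hxseqX n) _ (hxseqX k))
    have h3 := hN n hn
    have h4 := hN k hk
    rw [← hxseqval n] at h3; rw [← hxseqval k] at h4
    rw [dist_eq_norm]
    have hsq : ‖xseq n - xseq k‖ ^ 2 < ε ^ 2 := by nlinarith
    exact lt_of_pow_lt_pow_left₀ 2 hε.le hsq
  obtain ⟨z, hz⟩ := cauchySeq_tendsto_of_complete hcauchy
  have hzX : z ∈ X := hXcl.mem_of_tendsto hz (Eventually.of_forall hxseqX)
  refine ⟨z, hzX, fun x hx => ?_⟩
  have hGz : G z = m := by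
    have h1 : Tendsto (fun n => G (xseq n)) atTop (𝓝 (G z)) := (hGc.tendsto z).comp hz
    have h2 : Tendsto (fun n => G (xseq n)) atTop (𝓝 m) := by
      simpa only [hxseqval] using hlim
    exact tendsto_nhds_unique h1 h2
  rw [hGz]; exact hle x hx

/-- Existence of a minimizer of the regularized objective together with
quadratic growth around it. -/
private lemma aux_reg_min [CompleteSpace E]
    (X : Set E) (hXne : X.Nonempty) (hXcl : IsClosed X) (hXcv : Convex ℝ X)
    (F : E → ℝ) (hFc : Continuous F) (hFcv : ConvexOn ℝ X F)
    (B : ℝ) (hB : ∀ x ∈ X, B ≤ F x)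
    (r : ℝ) (hr : 0 < r) (c : E) :
    ∃ z ∈ X, ∀ x ∈ X,
      (F z + r/2 * ‖z - c‖^2) + r/2 * ‖x - z‖^2 ≤ F x + r/2 * ‖x - c‖^2 := by
  set G : E → ℝ := fun y => F y + r/2 * ‖y - c‖^2 with hG
  have hGc : Continuous G := by
    apply hFc.add
    exact continuous_const.mul (((continuous_id.sub continuous_const).norm).pow 2)
  -- strong convexity of G along segments
  have hscG : ∀ x ∈ X, ∀ y ∈ X, ∀ t ∈ Set.Icc (0:ℝ) 1,
      G ((1-t) • x + t • y)
        ≤ (1-t) * G x + t * G y - r/2 * (t * (1-t)) * ‖x - y‖^2 := by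
    intro x hx y hy t ht
    have hF := hFcv.2 hx hy (by linarith [ht.2] : (0:ℝ) ≤ 1 - t) ht.1 (by ring)
    have hrw : ((1-t) • x + t • y) - c = (1-t) • (x - c) + t • (y - c) := by
      module
    have hxy : (x - c) - (y - c) = x - y := by abel
    have Hq : ‖((1-t) • x + t • y) - c‖^2
        = (1-t) * ‖x - c‖^2 + t * ‖y - c‖^2 - t * (1-t) * ‖x - y‖^2 := by
      rw [hrw, aux_norm_combo_sq, hxy]
    have Hq' : r/2 * ‖((1-t) • x + t • y) - c‖^2
        = r/2 * ((1-t) * ‖x - c‖^2 + t * ‖y - c‖^2 - t * (1-t) * ‖x - y‖^2) := by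
      rw [Hq]
    simp only [smul_eq_mul] at hF
    simp only [hG]
    linarith [hF, Hq']
  have hlb : BddBelow (G '' X) := by
    refine ⟨B, ?_⟩
    rintro v ⟨x, hx, rfl⟩
    have := hB x hx
    simp only [hG]
    nlinarith [sq_nonneg ‖x - c‖, hr.le]
  obtain ⟨z, hzX, hzmin⟩ := aux_exists_minOn X hXne hXcl G hGc (r/8) (by positivity)
    (fun x hx y hy => hXcv hx hy (by norm_num) (by norm_num) (by norm_num))
    (fun x hx y hy => by
      have := hscG x hx y hy (1/2) (by norm_num)
      norm_num at this ⊢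
      linarith) hlb
  refine ⟨z, hzX, fun x hx => ?_⟩
  -- quadratic growth
  have key : ∀ t ∈ Set.Ioo (0:ℝ) 1, r/2 * (1-t) * ‖x - z‖^2 ≤ G x - G z := by
    intro t ht
    have hmem : (1-t) • z + t • x ∈ X :=
      hXcv hzX hx (by linarith [ht.2]) ht.1.le (by ring)
    have h1 := hscG z hzX x hx t ⟨ht.1.le, ht.2.le⟩
    have h2 := hzmin _ hmem
    have hd : ‖z - x‖ = ‖x - z‖ := norm_sub_rev _ _
    rw [hd] at h1
    simp only [hG] at h1 h2 ⊢
    have h3 : t * (r/2 * (1-t) * ‖x - z‖^2)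
        ≤ t * ((F x + r/2 * ‖x - c‖^2) - (F z + r/2 * ‖z - c‖^2)) := by nlinarith [h1, h2]
    exact le_of_mul_le_mul_left h3 ht.1
  have hten : Tendsto (fun t : ℝ => r/2 * (1-t) * ‖x - z‖^2) (𝓝[>] 0)
      (𝓝 (r/2 * (1-0) * ‖x - z‖^2)) := by
    apply Tendsto.mono_left _ nhdsWithin_le_nhds
    exact (Continuous.tendsto (by continuity) 0)
  have hIoo : Set.Ioo (0:ℝ) 1 ∈ 𝓝[>] (0:ℝ) :=
    Ioo_mem_nhdsGT_of_mem ⟨le_refl 0, one_pos⟩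
  have hfin : r/2 * (1-0) * ‖x - z‖^2 ≤ G x - G z :=
    le_of_tendsto hten (eventually_of_mem hIoo key)
  have : G z + r/2 * ‖x - z‖^2 ≤ G x := by norm_num at hfin; linarith
  simpa only [hG] using this

end Aux

set_option maxHeartbeats 1000000 in
/-- Theorem 3.3: regularized Algorithm 1 under the δ-inexact initialization
oracle.  With `r = ε/D²`, `ε_r = (ε/2)·min{1, δ²/(4D²)}`, for any outputs `xr, xr'` that solve
the two regularized problems (regularization centers `x₀` and `x₀'` with `‖x₀ − x₀'‖ ≤ δ`)
to accuracy `ε_r`, one has `F xr − F x* ≤ ε` and `‖xr − xr'‖² ≤ 4δ²`. -/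
theorem regularized_min_inexact_init
    {E : Type*} [NormedAddCommGroup E] [InnerProductSpace ℝ E] [CompleteSpace E]
    (X : Set E) (hXne : X.Nonempty) (hXcl : IsClosed X) (hXcv : Convex ℝ X)
    (F : E → ℝ) (hFdiff : Differentiable ℝ F) (hFcv : ConvexOn ℝ X F)
    (ε δ D : ℝ) (hε : 0 < ε) (hδ : 0 ≤ δ) (hD : 0 < D)
    (xs : E) (hxs : xs ∈ X) (hmin : ∀ x ∈ X, F xs ≤ F x)
    (x₀ x₀' : E) (hx₀ : x₀ ∈ X) (hx₀' : x₀' ∈ X)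
    (hinit : ‖xs - x₀‖ ≤ D) (hdev : ‖x₀ - x₀'‖ ≤ δ)
    (r εr : ℝ) (hr : r = ε / D ^ 2) (hεr : εr = ε / 2 * min 1 (δ ^ 2 / (4 * D ^ 2)))
    (xr xr' : E) (hxrX : xr ∈ X) (hxr'X : xr' ∈ X)
    (hxr : ∀ x ∈ X,
      F xr + r / 2 * ‖xr - x₀‖ ^ 2 ≤ F x + r / 2 * ‖x - x₀‖ ^ 2 + εr)
    (hxr' : ∀ x ∈ X,
      F xr' + r / 2 * ‖xr' - x₀'‖ ^ 2 ≤ F x + r / 2 * ‖x - x₀'‖ ^ 2 + εr) :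
    F xr - F xs ≤ ε ∧ ‖xr - xr'‖ ^ 2 ≤ 4 * δ ^ 2 := by
  have hD2 : (0:ℝ) < D ^ 2 := by positivity
  have hrpos : 0 < r := by rw [hr]; positivity
  have hrD : r * D ^ 2 = ε := by rw [hr]; field_simp
  have hεrpos : 0 ≤ εr := by
    rw [hεr]
    have h1 : (0:ℝ) ≤ min 1 (δ ^ 2 / (4 * D ^ 2)) := le_min one_pos.le (by positivity)
    positivity
  have hεrle1 : εr ≤ ε / 2 := by
    rw [hεr]
    nlinarith [min_le_left (1:ℝ) (δ ^ 2 / (4 * D ^ 2)), hε.le,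
      le_min one_pos.le (show (0:ℝ) ≤ δ ^ 2 / (4 * D ^ 2) by positivity)]
  have hεrle2 : εr ≤ r * δ ^ 2 / 8 := by
    rw [hεr, hr]
    have h1 : min 1 (δ ^ 2 / (4 * D ^ 2)) ≤ δ ^ 2 / (4 * D ^ 2) := min_le_right _ _
    have h2 : ε / 2 * min 1 (δ ^ 2 / (4 * D ^ 2)) ≤ ε / 2 * (δ ^ 2 / (4 * D ^ 2)) := by
      apply mul_le_mul_of_nonneg_left h1 (by positivity)
    have h3 : ε / 2 * (δ ^ 2 / (4 * D ^ 2)) = ε / D ^ 2 * δ ^ 2 / 8 := by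
      have hD0 : D ≠ 0 := hD.ne'
      field_simp
      ring_nf
    linarith
  constructor
  · -- first claim
    have h := hxr xs hxs
    have hsq : ‖xs - x₀‖ ^ 2 ≤ D ^ 2 := by
      nlinarith [norm_nonneg (xs - x₀)]
    nlinarith [sq_nonneg ‖xr - x₀‖, hrpos.le]
  · -- second claim
    have hFc : Continuous F := hFdiff.continuous
    obtain ⟨z, hzX, hzgrow⟩ :=
      aux_reg_min X hXne hXcl hXcv F hFc hFcv (F xs) hmin r hrpos x₀
    obtain ⟨z', hz'X, hz'grow⟩ :=
      aux_reg_min X hXne hXcl hXcv F hFc hFcv (F xs) hmin r hrpos x₀'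
    -- ‖xr - z‖ ≤ δ/2
    have hxrz : ‖xr - z‖ ≤ δ / 2 := by
      have h1 := hxr z hzX
      have h2 := hzgrow xr hxrX
      have hsq : ‖xr - z‖ ^ 2 ≤ δ ^ 2 / 4 := by
        have h3 : r/2 * ‖xr - z‖ ^ 2 ≤ εr := by linarith [h1, h2]
        nlinarith [hrpos, hεrle2]
      nlinarith [norm_nonneg (xr - z), hδ]
    have hxr'z' : ‖xr' - z'‖ ≤ δ / 2 := by
      have h1 := hxr' z' hz'X
      have h2 := hz'grow xr' hxr'X
      have hsq : ‖xr' - z'‖ ^ 2 ≤ δ ^ 2 / 4 := by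
        have h3 : r/2 * ‖xr' - z'‖ ^ 2 ≤ εr := by linarith [h1, h2]
        nlinarith [hrpos, hεrle2]
      nlinarith [norm_nonneg (xr' - z'), hδ]
    -- ‖z - z'‖ ≤ δ
    have hzz' : ‖z - z'‖ ≤ δ := by
      have hA := hzgrow z' hz'X
      have hB := hz'grow z hzX
      have hI := aux_inner_ident z z' x₀ x₀'
      have hnn1 : ‖z' - z‖ = ‖z - z'‖ := norm_sub_rev _ _
      have hnn2 : ‖x₀' - x₀‖ = ‖x₀ - x₀'‖ := norm_sub_rev _ _
      have hCS : ⟪z' - z, x₀' - x₀⟫ ≤ ‖z - z'‖ * δ := by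
        calc ⟪z' - z, x₀' - x₀⟫ ≤ ‖z' - z‖ * ‖x₀' - x₀‖ := real_inner_le_norm _ _
          _ ≤ ‖z - z'‖ * δ := by
            rw [hnn1, hnn2]
            exact mul_le_mul_of_nonneg_left hdev (norm_nonneg _)
      have hs2 : ‖z - z'‖ ^ 2 ≤ ‖z - z'‖ * δ := by
        -- from hA + hB : r * ‖z - z'‖² ≤ r * ⟪z' - z, x₀' - x₀⟫
        have hzr : ‖z' - z‖ = ‖z - z'‖ := norm_sub_rev _ _
        rw [hzr] at hA
        have hI2 : r/2 * (‖z' - x₀‖^2 - ‖z - x₀‖^2 + ‖z - x₀'‖^2 - ‖z' - x₀'‖^2)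
            = r/2 * (2 * ⟪z' - z, x₀' - x₀⟫) := by rw [hI]
        have hsum : r * ‖z - z'‖ ^ 2 ≤ r * ⟪z' - z, x₀' - x₀⟫ := by linarith [hA, hB, hI2]
        have : ‖z - z'‖ ^ 2 ≤ ⟪z' - z, x₀' - x₀⟫ := le_of_mul_le_mul_left hsum hrpos
        linarith [hCS]
      by_contra hcon
      push_neg at hcon
      have hpos : 0 < ‖z - z'‖ := lt_of_le_of_lt hδ hcon
      nlinarith
    -- triangle inequality
    have htri : ‖xr - xr'‖ ≤ 2 * δ := by
      have h1 : xr - xr' = (xr - z) + ((z - z') + (z' - xr')) := by abel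
      have h2 : ‖xr - xr'‖ ≤ ‖xr - z‖ + (‖z - z'‖ + ‖z' - xr'‖) := by
        rw [h1]
        exact (norm_add_le _ _).trans (add_le_add le_rfl (norm_add_le _ _))
      have h3 : ‖z' - xr'‖ = ‖xr' - z'‖ := norm_sub_rev _ _
      rw [h3] at h2
      linarith
    nlinarith [norm_nonneg (xr - xr'), htri, hδ]
end

section
/- Let E be a real Hilbert space, X ⊆ E a nonempty closed convex set, and F : E → ℝ a differentiable function that is convex on X. Let ℓ > 0, D > 0, δ ≥ 0, and 0 < ε ≤ ℓD². Let x* ∈ X minimize F over X and let x₀ ∈ X satisfy ‖x* − x₀‖ ≤ D. Set r = ε/D² and ε_r = 6δ²D³·√(ℓ/(2ε³)). Define F_r(x) = F(x) + (r/2)‖x − x₀‖², and let x_r, x_r' ∈ X satisfy F_r(x_r) − inf_{x∈X} F_r(x) ≤ ε_r and F_r(x_r') − inf_{x∈X} F_r(x) ≤ ε_r. Then F(x_r) − F(x*) ≤ ε_r + ε/2 and ‖x_r − x_r'‖² ≤ 48·δ²·D⁵·√(ℓ/(2ε⁵)). -/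
open RealInnerProductSpace

/-- Theorem 3.5: regularized Algorithm 1 under the δ-inexact deterministic
gradient oracle.  With `r = ε/D²`, `ε_r = 6δ²D³√(ℓ/(2ε³))`, for any two outputs `xr, xr'`
that solve the regularized problem (center `x₀`) to accuracy `ε_r`, one has
`F xr − F x* ≤ ε_r + ε/2` and `‖xr − xr'‖² ≤ 48δ²D⁵√(ℓ/(2ε⁵))`. -/
theorem regularized_min_inexact_gradient
    {E : Type*} [NormedAddCommGroup E] [InnerProductSpace ℝ E] [CompleteSpace E]
    (X : Set E) (hXne : X.Nonempty) (hXcl : IsClosed X) (hXcv : Convex ℝ X)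
    (F : E → ℝ) (hFdiff : Differentiable ℝ F) (hFcv : ConvexOn ℝ X F)
    (ℓ D δ ε : ℝ) (hℓ : 0 < ℓ) (hD : 0 < D) (hδ : 0 ≤ δ)
    (hε : 0 < ε) (hεℓ : ε ≤ ℓ * D ^ 2)
    (xs : E) (hxs : xs ∈ X) (hmin : ∀ x ∈ X, F xs ≤ F x)
    (x₀ : E) (hx₀ : x₀ ∈ X) (hinit : ‖xs - x₀‖ ≤ D)
    (r εr : ℝ) (hr : r = ε / D ^ 2)
    (hεr : εr = 6 * δ ^ 2 * D ^ 3 * Real.sqrt (ℓ / (2 * ε ^ 3)))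
    (xr xr' : E) (hxrX : xr ∈ X) (hxr'X : xr' ∈ X)
    (hxr : ∀ x ∈ X,
      F xr + r / 2 * ‖xr - x₀‖ ^ 2 ≤ F x + r / 2 * ‖x - x₀‖ ^ 2 + εr)
    (hxr' : ∀ x ∈ X,
      F xr' + r / 2 * ‖xr' - x₀‖ ^ 2 ≤ F x + r / 2 * ‖x - x₀‖ ^ 2 + εr) :
    F xr - F xs ≤ εr + ε / 2 ∧
    ‖xr - xr'‖ ^ 2 ≤ 48 * δ ^ 2 * D ^ 5 * Real.sqrt (ℓ / (2 * ε ^ 5)) := by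

  have hr0 : 0 < r := by rw [hr]; positivity
  have hεr0 : 0 ≤ εr := by rw [hεr]; positivity
  constructor
  · have h1 := hxr xs hxs
    have hn : ‖xs - x₀‖ ^ 2 ≤ D ^ 2 := by nlinarith [norm_nonneg (xs - x₀)]
    have h2 : r / 2 * ‖xs - x₀‖ ^ 2 ≤ ε / 2 := by
      rw [hr]
      rw [div_div, div_mul_eq_mul_div, div_le_div_iff₀ (by positivity) (by norm_num)]
      nlinarith
    nlinarith [sq_nonneg ‖xr - x₀‖, norm_nonneg (xr - x₀)]
  · set m := (1/2 : ℝ) • xr + (1/2 : ℝ) • xr' with hm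
    have hmX : m ∈ X := hXcv hxrX hxr'X (by norm_num) (by norm_num) (by norm_num)
    have hFm : F m ≤ 1/2 * F xr + 1/2 * F xr' := by
      rw [hm]
      simpa [smul_eq_mul] using hFcv.2 hxrX hxr'X (by norm_num : (0:ℝ) ≤ 1/2)
        (by norm_num : (0:ℝ) ≤ 1/2) (by norm_num)
    obtain ⟨a, ha⟩ : ∃ a, a = xr - x₀ := ⟨_, rfl⟩
    obtain ⟨b, hb'⟩ : ∃ b, b = xr' - x₀ := ⟨_, rfl⟩
    have hpar : ‖m - x₀‖ ^ 2
        = (‖xr - x₀‖ ^ 2 + ‖xr' - x₀‖ ^ 2) / 2 - ‖xr - xr'‖ ^ 2 / 4 := by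
      have e1 : m - x₀ = (1/2 : ℝ) • (a + b) := by
        rw [hm, ha, hb']; module
      have e2 : xr - xr' = a - b := by rw [ha, hb']; abel
      have h12 : ‖(1/2 : ℝ)‖ = 1/2 := by norm_num
      rw [e1, e2, ← ha, ← hb', norm_smul, h12, mul_pow, norm_add_sq_real,
        norm_sub_sq_real]
      ring
    have h1 := hxr m hmX
    have h2 := hxr' m hmX
    have hkey : r / 4 * ‖xr - xr'‖ ^ 2 ≤ 2 * εr := by nlinarith
    have hb : ‖xr - xr'‖ ^ 2 ≤ 8 * εr / r := by
      rw [le_div_iff₀ hr0]; nlinarith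
    have hS : Real.sqrt (ℓ / (2 * ε ^ 3)) = ε * Real.sqrt (ℓ / (2 * ε ^ 5)) := by
      rw [← Real.sqrt_sq hε.le, ← Real.sqrt_mul (sq_nonneg ε)]
      congr 1
      field_simp
      ring
      rw [Real.sq_sqrt (sq_nonneg ε)]
    have hRHS : 8 * εr / r = 48 * δ ^ 2 * D ^ 5 * Real.sqrt (ℓ / (2 * ε ^ 5)) := by
      rw [hεr, hr, hS]
      field_simp
      ring
    linarith [hb, hRHS.le]
end

section
/- Let E and E' be real Hilbert spaces, X ⊆ E and Y ⊆ E' nonempty convex sets, and F : E × E' → ℝ a differentiable function that is convex-concave on X × Y, with saddle operator G(x,y) = (∇_x F(x,y), −∇_y F(x,y)). Let T ≥ 1 be an integer, let z_t = (x_t, y_t) ∈ X × Y for t = 0, …, T−1, and let (x̄_T, ȳ_T) = (1/T)·Σ_{t=0}^{T−1} (x_t, y_t). If ε ∈ ℝ satisfies (1/T)·Σ_{t=0}^{T−1} ⟪G(z_t), z_t − z⟫ ≤ ε for every z ∈ X × Y, then F(x̄_T, y) − F(x, ȳ_T) ≤ ε for every (x, y) ∈ X × Y. -/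
open RealInnerProductSpace

noncomputable section

lemma gradient_neg' {G : Type*} [NormedAddCommGroup G] [InnerProductSpace ℝ G] [CompleteSpace G]
    (f : G → ℝ) (x : G) : gradient (fun y => -f y) x = -gradient f x := by
  simp only [gradient, fderiv_fun_neg, map_neg]

lemma inner_gradient_sub_le_of_convexOn {G : Type*} [NormedAddCommGroup G]
    [InnerProductSpace ℝ G] [CompleteSpace G] {f : G → ℝ} {X : Set G}
    (hf : Differentiable ℝ f) (hc : ConvexOn ℝ X f)
    {a b : G} (ha : a ∈ X) (hb : b ∈ X) : ⟪gradient f a, b - a⟫ ≤ f b - f a := by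
  set L : ℝ →ᵃ[ℝ] G := AffineMap.lineMap a b with hL
  have hsub : Set.Icc (0:ℝ) 1 ⊆ L ⁻¹' X := by
    intro t ht
    have : L t ∈ segment ℝ a b := by
      rw [segment_eq_image_lineMap]
      exact ⟨t, ht, rfl⟩
    exact hc.1.segment_subset ha hb this
  have hgc : ConvexOn ℝ (Set.Icc (0:ℝ) 1) (f ∘ L) :=
    (hc.comp_affineMap L).subset hsub (convex_Icc 0 1)
  have hc0 : HasDerivAt (fun t : ℝ => L t) (b - a) 0 := by
    have h1 : HasDerivAt (fun t : ℝ => t • (b - a) + a) (b - a) 0 := by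
      simpa using ((hasDerivAt_id (0:ℝ)).smul_const (b - a)).add_const a
    refine h1.congr_deriv ?_ |>.congr_of_eventuallyEq ?_
    · rfl
    · filter_upwards with t
      simp only [hL, AffineMap.lineMap_apply_module]
      module
  have hL0 : L 0 = a := by simp [hL]
  have hd : HasDerivAt (f ∘ L) (fderiv ℝ f a (b - a)) 0 := by
    have h2 : HasFDerivAt f (fderiv ℝ f a) (L 0) := hL0 ▸ (hf a).hasFDerivAt
    exact h2.comp_hasDerivAt 0 hc0
  have hkey := hgc.le_slope_of_hasDerivAt (Set.left_mem_Icc.2 zero_le_one)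
    (Set.right_mem_Icc.2 zero_le_one) zero_lt_one hd
  have hslope : slope (f ∘ L) 0 1 = f b - f a := by
    simp [slope_def_field, hL]
  have hgrad : fderiv ℝ f a (b - a) = ⟪gradient f a, b - a⟫ := by
    rw [gradient, InnerProductSpace.toDual_symm_apply]
  rw [hslope] at hkey
  rw [← hgrad]
  exact hkey

variable {E E' : Type*} [NormedAddCommGroup E] [InnerProductSpace ℝ E] [CompleteSpace E]
  [NormedAddCommGroup E'] [InnerProductSpace ℝ E'] [CompleteSpace E']

/-- The saddle operator `G(x,y) = (∇ₓ F(x,y), −∇_y F(x,y))` on the Hilbert product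
`WithLp 2 (E × E')`. -/
def saddleOp (F : E × E' → ℝ) (z : WithLp 2 (E × E')) : WithLp 2 (E × E') :=
  (WithLp.equiv 2 (E × E')).symm
    (gradient (fun u => F (u, (WithLp.equiv 2 (E × E') z).2)) (WithLp.equiv 2 (E × E') z).1,
     -gradient (fun v => F ((WithLp.equiv 2 (E × E') z).1, v)) (WithLp.equiv 2 (E × E') z).2)

/-- `X × Y` as a subset of the Hilbert product. -/
def prodSet (X : Set E) (Y : Set E') : Set (WithLp 2 (E × E')) :=
  (WithLp.equiv 2 (E × E')) ⁻¹' (X ×ˢ Y)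

/-- Lemma B.2.  If the averaged variational-inequality residuals of points
`z_0, …, z_{T−1} ∈ X × Y` are at most `ε`, then the duality gap of the averaged iterate is at
most `ε`. -/
theorem averaged_vi_residual_bounds_duality_gap
    (X : Set E) (Y : Set E') (hXne : X.Nonempty) (hYne : Y.Nonempty)
    (hXcv : Convex ℝ X) (hYcv : Convex ℝ Y)
    (F : E × E' → ℝ) (hFdiff : Differentiable ℝ F)
    (hcvx : ∀ y ∈ Y, ConvexOn ℝ X (fun x => F (x, y)))
    (hccv : ∀ x ∈ X, ConcaveOn ℝ Y (fun y => F (x, y)))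
    (T : ℕ) (hT : 1 ≤ T)
    (z : ℕ → WithLp 2 (E × E')) (hz : ∀ t < T, z t ∈ prodSet X Y)
    (ε : ℝ)
    (hres : ∀ w ∈ prodSet X Y,
      (T : ℝ)⁻¹ * ∑ t ∈ Finset.range T, ⟪saddleOp F (z t), z t - w⟫ ≤ ε) :
    ∀ x ∈ X, ∀ y ∈ Y,
      F ((WithLp.equiv 2 (E × E') ((T : ℝ)⁻¹ • ∑ t ∈ Finset.range T, z t)).1, y) -
        F (x, (WithLp.equiv 2 (E × E') ((T : ℝ)⁻¹ • ∑ t ∈ Finset.range T, z t)).2) ≤ ε := by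
  intro x hx y hy
  have hT0 : (0:ℝ) < (T : ℝ) := by exact_mod_cast lt_of_lt_of_le zero_lt_one hT
  set c : ℝ := (T : ℝ)⁻¹ with hcdef
  have hc0 : 0 ≤ c := inv_nonneg.2 hT0.le
  have hcsum : ∑ _t ∈ Finset.range T, c = 1 := by
    rw [Finset.sum_const, Finset.card_range, nsmul_eq_mul, hcdef,
      mul_inv_cancel₀ (ne_of_gt hT0)]
  set φ := WithLp.equiv 2 (E × E') with hφ
  set xt : ℕ → E := fun t => (φ (z t)).1 with hxt
  set yt : ℕ → E' := fun t => (φ (z t)).2 with hyt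
  have hmem : ∀ t ∈ Finset.range T, xt t ∈ X ∧ yt t ∈ Y := by
    intro t ht
    exact hz t (Finset.mem_range.1 ht)
  -- the averaged iterate components
  have hsum : φ (∑ t ∈ Finset.range T, z t) = ∑ t ∈ Finset.range T, φ (z t) := by
    induction Finset.range T using Finset.cons_induction with
    | empty => simp [hφ]
    | cons a s has ih =>
      rw [Finset.sum_cons, Finset.sum_cons, ← ih]; exact WithLp.ofLp_add _ (z a) _
  have hbar : φ (c • ∑ t ∈ Finset.range T, z t) =
      (∑ t ∈ Finset.range T, c • xt t, ∑ t ∈ Finset.range T, c • yt t) := by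
    rw [show φ (c • ∑ t ∈ Finset.range T, z t) = c • φ (∑ t ∈ Finset.range T, z t) from
      WithLp.ofLp_smul _ c _, hsum]
    ext
    · simp [Prod.fst_sum, Finset.smul_sum, hxt]
    · simp [Prod.snd_sum, Finset.smul_sum, hyt]
  -- Jensen
  have hJ1 : F ((φ (c • ∑ t ∈ Finset.range T, z t)).1, y) ≤
      ∑ t ∈ Finset.range T, c * F (xt t, y) := by
    rw [hbar]
    exact (hcvx y hy).map_sum_le (fun t _ => hc0) hcsum (fun t ht => (hmem t ht).1)
  have hJ2 : ∑ t ∈ Finset.range T, c * F (x, yt t) ≤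
      F (x, (φ (c • ∑ t ∈ Finset.range T, z t)).2) := by
    rw [hbar]
    exact (hccv x hx).le_map_sum (fun t _ => hc0) hcsum (fun t ht => (hmem t ht).2)
  -- per-term bound
  set w : WithLp 2 (E × E') := (WithLp.equiv 2 (E × E')).symm (x, y) with hw
  have hwmem : w ∈ prodSet X Y := by
    simp [prodSet, hw, Set.mem_prod, hx, hy]
  have hterm : ∀ t ∈ Finset.range T,
      F (xt t, y) - F (x, yt t) ≤ ⟪saddleOp F (z t), z t - w⟫ := by
    intro t ht
    obtain ⟨hxtX, hytY⟩ := hmem t ht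
    have hdx : Differentiable ℝ (fun u : E => F (u, yt t)) :=
      hFdiff.comp (differentiable_id.prodMk (differentiable_const _))
    have hdy : Differentiable ℝ (fun v : E' => -F (xt t, v)) :=
      (hFdiff.comp ((differentiable_const _).prodMk differentiable_id)).neg
    have h1 : ⟪gradient (fun u : E => F (u, yt t)) (xt t), x - xt t⟫ ≤
        F (x, yt t) - F (xt t, yt t) :=
      inner_gradient_sub_le_of_convexOn hdx (hcvx (yt t) hytY) hxtX hx
    have h2 : ⟪gradient (fun v : E' => -F (xt t, v)) (yt t), y - yt t⟫ ≤
        -F (xt t, y) - -F (xt t, yt t) :=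
      inner_gradient_sub_le_of_convexOn hdy ((hccv (xt t) hxtX).neg) hytY hy
    rw [gradient_neg' (fun v : E' => F (xt t, v)) (yt t), inner_neg_left] at h2
    have hinner : ⟪saddleOp F (z t), z t - w⟫ =
        ⟪gradient (fun u : E => F (u, yt t)) (xt t), xt t - x⟫ +
        ⟪-gradient (fun v : E' => F (xt t, v)) (yt t), yt t - y⟫ := by
      rw [WithLp.prod_inner_apply]
      congr 1
    rw [hinner]
    have e1 : ⟪gradient (fun u : E => F (u, yt t)) (xt t), xt t - x⟫ =
        -⟪gradient (fun u : E => F (u, yt t)) (xt t), x - xt t⟫ := by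
      rw [← inner_neg_right, neg_sub]
    have e2 : ⟪-gradient (fun v : E' => F (xt t, v)) (yt t), yt t - y⟫ =
        ⟪gradient (fun v : E' => F (xt t, v)) (yt t), y - yt t⟫ := by
      rw [inner_neg_left, ← inner_neg_right, neg_sub]
    rw [e1, e2]
    linarith
  -- combine
  have hsum2 : ∑ t ∈ Finset.range T, (F (xt t, y) - F (x, yt t)) ≤
      ∑ t ∈ Finset.range T, ⟪saddleOp F (z t), z t - w⟫ :=
    Finset.sum_le_sum hterm
  have hfinal := hres w hwmem
  calc F ((φ (c • ∑ t ∈ Finset.range T, z t)).1, y) -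
        F (x, (φ (c • ∑ t ∈ Finset.range T, z t)).2)
      ≤ ∑ t ∈ Finset.range T, c * F (xt t, y) -
        ∑ t ∈ Finset.range T, c * F (x, yt t) := by linarith
    _ = c * ∑ t ∈ Finset.range T, (F (xt t, y) - F (x, yt t)) := by
        rw [Finset.mul_sum, ← Finset.sum_sub_distrib]
        exact Finset.sum_congr rfl (fun i _ => by ring)
    _ ≤ c * ∑ t ∈ Finset.range T, ⟪saddleOp F (z t), z t - w⟫ :=
        mul_le_mul_of_nonneg_left hsum2 hc0
    _ ≤ ε := hfinal
end
end

section
/- Let E and E' be real Hilbert spaces, X ⊆ E and Y ⊆ E' nonempty closed convex sets each of diameter at most D, and F : E × E' → ℝ a differentiable function that is convex-concave on X × Y, with saddle operator G(x,y) = (∇_x F(x,y), −∇_y F(x,y)). Assume G is monotone and ℓ-Lipschitz on X × Y and ‖G(z)‖ ≤ L for all z ∈ X × Y. Let δ ≥ 0 and let G̃, G̃' : E × E' → E × E' satisfy ‖G̃(z) − G(z)‖ ≤ δ and ‖G̃'(z) − G(z)‖ ≤ δ for all z ∈ X × Y. Let T ≥ 1, set α = 1/(ℓ√T), fix z₀ ∈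 X × Y, and define two trajectories z_{t+1} = Π_{X×Y}(z_t − α·G̃(z_t)) and z'_{t+1} = Π_{X×Y}(z_t' − α·G̃'(z_t')) for t = 0, …, T−1 with z₀' = z₀, and let z̄_T = (x̄_T, ȳ_T) and z̄'_T be the respective averages (1/T)·Σ_{t=0}^{T−1} of the iterates. Then: (i) F(x̄_T, y) − F(x, ȳ_T) ≤ ℓD²/√T + (L² + δ²)/(ℓ√T) + √2·δ·D for every (x,y) ∈ X × Y; and (ii) ‖z̄_T − z̄'_T‖² ≤ (4e/(3ℓ²))·δ²·T. -/
open RealInnerProductSpace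

noncomputable section

variable {E E' : Type*} [NormedAddCommGroup E] [InnerProductSpace ℝ E] [CompleteSpace E]
  [NormedAddCommGroup E'] [InnerProductSpace ℝ E'] [CompleteSpace E']

/-- `p` is the metric projection of `v` onto `S`. -/
def IsProjOn {H : Type*} [NormedAddCommGroup H] (S : Set H) (v p : H) : Prop :=
  p ∈ S ∧ ∀ w ∈ S, ‖v - p‖ ≤ ‖v - w‖

set_option maxHeartbeats 2000000

section AuxLemmas

variable {H : Type*} [NormedAddCommGroup H] [InnerProductSpace ℝ H]

lemma isProjOn_inner_le {S : Set H} (hconv : Convex ℝ S) {v p : H}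
    (hp : IsProjOn S v p) : ∀ w ∈ S, ⟪v - p, w - p⟫ ≤ 0 := by
  haveI : Nonempty S := ⟨⟨p, hp.1⟩⟩
  rw [← norm_eq_iInf_iff_real_inner_le_zero hconv hp.1]
  refine le_antisymm (le_ciInf fun w => hp.2 w w.2) ?_
  apply ciInf_le _ (⟨p, hp.1⟩ : S)
  refine ⟨0, fun a ha => ?_⟩
  obtain ⟨w, rfl⟩ := ha
  exact norm_nonneg _

lemma proj_sq_le {S : Set H} (hconv : Convex ℝ S) {v p : H}
    (hp : IsProjOn S v p) {w : H} (hw : w ∈ S) : ‖p - w‖ ^ 2 ≤ ‖v - w‖ ^ 2 := by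
  have h := isProjOn_inner_le hconv hp w hw
  have key : ‖v - w‖ ^ 2 = ‖v - p‖ ^ 2 + ‖p - w‖ ^ 2 - 2 * ⟪v - p, w - p⟫ := by
    have : v - w = (v - p) - (w - p) := by abel
    rw [this, norm_sub_sq_real (v - p) (w - p)]
    have : ‖w - p‖ = ‖p - w‖ := norm_sub_rev _ _
    rw [this]; ring
  nlinarith [sq_nonneg ‖v - p‖]

lemma proj_nonexpansive {S : Set H} (hconv : Convex ℝ S) {v₁ v₂ p₁ p₂ : H}
    (h₁ : IsProjOn S v₁ p₁) (h₂ : IsProjOn S v₂ p₂) : ‖p₁ - p₂‖ ≤ ‖v₁ - v₂‖ := by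
  have a₁ := isProjOn_inner_le hconv h₁ p₂ h₂.1
  have a₂ := isProjOn_inner_le hconv h₂ p₁ h₁.1
  have key : ‖p₁ - p₂‖ ^ 2 ≤ ⟪v₁ - v₂, p₁ - p₂⟫ := by
    have e : ⟪v₁ - v₂, p₁ - p₂⟫ - ‖p₁ - p₂‖ ^ 2
        = -⟪v₁ - p₁, p₂ - p₁⟫ - ⟪v₂ - p₂, p₁ - p₂⟫ := by
      rw [← real_inner_self_eq_norm_sq]
      simp only [inner_sub_left, inner_sub_right]
      ring
    nlinarith
  have h2 : ⟪v₁ - v₂, p₁ - p₂⟫ ≤ ‖v₁ - v₂‖ * ‖p₁ - p₂‖ := real_inner_le_norm _ _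
  rcases eq_or_lt_of_le (norm_nonneg (p₁ - p₂)) with h0 | h0
  · rw [← h0]; exact norm_nonneg _
  · have := key.trans h2
    nlinarith

lemma convexOn_grad_ineq [CompleteSpace H] {X : Set H} {f : H → ℝ}
    (hf : Differentiable ℝ f) (hc : ConvexOn ℝ X f)
    {u x : H} (hu : u ∈ X) (hx : x ∈ X) :
    ⟪gradient f u, x - u⟫ ≤ f x - f u := by
  set g : ℝ → ℝ := fun t => f (u + t • (x - u)) with hg
  have hline : HasDerivAt (fun t : ℝ => u + t • (x - u)) (x - u) 0 := by
    simpa using ((hasDerivAt_id (0:ℝ)).smul_const (x - u)).const_add u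
  have hgrad : HasFDerivAt f (InnerProductSpace.toDual ℝ H (gradient f u)) u :=
    (hf u).hasGradientAt.hasFDerivAt
  have hgrad' : HasFDerivAt f (InnerProductSpace.toDual ℝ H (gradient f u))
      (u + (0:ℝ) • (x - u)) := by simpa using hgrad
  have hd : HasDerivAt g (⟪gradient f u, x - u⟫) 0 := by
    have h := hgrad'.comp_hasDerivAt 0 hline
    rw [InnerProductSpace.toDual_apply_apply] at h
    exact h
  have hW : HasDerivWithinAt g (⟪gradient f u, x - u⟫) (Set.Ioi (0:ℝ)) 0 :=
    hd.hasDerivWithinAt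
  rw [hasDerivWithinAt_iff_tendsto_slope' (by simp)] at hW
  refine le_of_tendsto hW ?_
  filter_upwards [Ioc_mem_nhdsGT_of_mem (Set.mem_Ico.mpr ⟨le_refl (0:ℝ), one_pos⟩)]
    with t ht
  obtain ⟨ht0, ht1⟩ := ht
  have hcomb : g t ≤ (1 - t) * f u + t * f x := by
    have := hc.2 hu hx (by linarith : (0:ℝ) ≤ 1 - t) ht0.le (by ring)
    have he : (1 - t) • u + t • x = u + t • (x - u) := by
      rw [smul_sub]; module
    rw [he] at this
    exact this
  have hg0 : g 0 = f u := by simp [hg]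
  rw [slope_def_field, hg0, sub_zero]
  rw [div_le_iff₀ ht0]
  nlinarith [hcomb]

lemma gradient_neg'_s10 [CompleteSpace H] {f : H → ℝ} {u : H} (hf : DifferentiableAt ℝ f u) :
    gradient (fun x => -f x) u = -gradient f u := by
  have h2 : HasFDerivAt f (InnerProductSpace.toDual ℝ H (gradient f u)) u :=
    hf.hasGradientAt.hasFDerivAt
  have h4 : HasGradientAt (fun x => -f x) (-(gradient f u)) u := by
    rw [hasGradientAt_iff_hasFDerivAt, map_neg]
    exact h2.neg
  exact h4.gradient

lemma concaveOn_grad_ineq [CompleteSpace H] {Y : Set H} {f : H → ℝ}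
    (hf : Differentiable ℝ f) (hc : ConcaveOn ℝ Y f)
    {u x : H} (hu : u ∈ Y) (hx : x ∈ Y) :
    f x - f u ≤ ⟪gradient f u, x - u⟫ := by
  have hcv : ConvexOn ℝ Y fun v => -f v := hc.neg
  have := convexOn_grad_ineq hf.neg hcv hu hx
  rw [show gradient (-f) u = -gradient f u from gradient_neg'_s10 (hf u), inner_neg_left] at this
  simp only [Pi.neg_apply] at this
  linarith

end AuxLemmas

/-- Theorem 4.2, part (ii).  Gradient descent ascent with stepsize
`α = 1/(ℓ√T)` and two `δ`-inexact deterministic gradient oracles `G̃, G̃'`, started from the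
same point: (i) the duality gap of the averaged iterate is at most
`ℓD²/√T + (L² + δ²)/(ℓ√T) + √2·δ·D`; (ii) `‖z̄_T − z̄'_T‖² ≤ (4e/(3ℓ²))·δ²·T`. -/
theorem gda_inexact_gradient
    (X : Set E) (Y : Set E') (hXne : X.Nonempty) (hYne : Y.Nonempty)
    (hXcl : IsClosed X) (hYcl : IsClosed Y) (hXcv : Convex ℝ X) (hYcv : Convex ℝ Y)
    (D : ℝ) (hXD : ∀ s₁ ∈ X, ∀ s₂ ∈ X, ‖s₁ - s₂‖ ≤ D) (hYD : ∀ s₁ ∈ Y, ∀ s₂ ∈ Y, ‖s₁ - s₂‖ ≤ D)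
    (F : E × E' → ℝ) (hFdiff : Differentiable ℝ F)
    (hcvx : ∀ y ∈ Y, ConvexOn ℝ X (fun x => F (x, y)))
    (hccv : ∀ x ∈ X, ConcaveOn ℝ Y (fun y => F (x, y)))
    (ℓ : ℝ) (hℓ : 0 < ℓ)
    (hmono : ∀ z₁ ∈ prodSet X Y, ∀ z₂ ∈ prodSet X Y,
      0 ≤ ⟪saddleOp F z₁ - saddleOp F z₂, z₁ - z₂⟫)
    (hlip : ∀ z₁ ∈ prodSet X Y, ∀ z₂ ∈ prodSet X Y,
      ‖saddleOp F z₁ - saddleOp F z₂‖ ≤ ℓ * ‖z₁ - z₂‖)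
    (L : ℝ) (hL : ∀ z ∈ prodSet X Y, ‖saddleOp F z‖ ≤ L)
    (δ : ℝ) (hδ : 0 ≤ δ)
    (Gt Gt' : WithLp 2 (E × E') → WithLp 2 (E × E'))
    (hGt : ∀ z ∈ prodSet X Y, ‖Gt z - saddleOp F z‖ ≤ δ)
    (hGt' : ∀ z ∈ prodSet X Y, ‖Gt' z - saddleOp F z‖ ≤ δ)
    (T : ℕ) (hT : 1 ≤ T) (α : ℝ) (hα : α = 1 / (ℓ * Real.sqrt T))
    (z z' : ℕ → WithLp 2 (E × E'))
    (hz0 : z 0 ∈ prodSet X Y) (hz0' : z' 0 = z 0)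
    (hupd : ∀ t < T, IsProjOn (prodSet X Y) (z t - α • Gt (z t)) (z (t + 1)))
    (hupd' : ∀ t < T, IsProjOn (prodSet X Y) (z' t - α • Gt' (z' t)) (z' (t + 1))) :
    (∀ x ∈ X, ∀ y ∈ Y,
      F ((WithLp.equiv 2 (E × E') ((T : ℝ)⁻¹ • ∑ t ∈ Finset.range T, z t)).1, y) -
        F (x, (WithLp.equiv 2 (E × E') ((T : ℝ)⁻¹ • ∑ t ∈ Finset.range T, z t)).2) ≤
      ℓ * D ^ 2 / Real.sqrt T + (L ^ 2 + δ ^ 2) / (ℓ * Real.sqrt T) +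
        Real.sqrt 2 * δ * D) ∧
    ‖(T : ℝ)⁻¹ • ∑ t ∈ Finset.range T, z t - (T : ℝ)⁻¹ • ∑ t ∈ Finset.range T, z' t‖ ^ 2 ≤
      4 * Real.exp 1 / (3 * ℓ ^ 2) * δ ^ 2 * T := by
  classical
  set S := prodSet X Y with hSdef
  set eqv := WithLp.equiv 2 (E × E') with heqv
  have hT0 : (0:ℝ) < T := by exact_mod_cast Nat.lt_of_lt_of_le Nat.zero_lt_one hT
  have hsT : (0:ℝ) < Real.sqrt T := Real.sqrt_pos.mpr hT0
  have hss : Real.sqrt T * Real.sqrt T = T := Real.mul_self_sqrt hT0.le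
  have hα0 : 0 < α := by rw [hα]; positivity
  have hα2 : α ^ 2 * ℓ ^ 2 = 1 / T := by
    rw [hα]; field_simp; nlinarith [hss]
  have hD0 : 0 ≤ D := by
    obtain ⟨x₀, hx₀⟩ := hXne
    have := hXD x₀ hx₀ x₀ hx₀
    simpa using this
  have hmemS : ∀ w ∈ S, (eqv w).1 ∈ X ∧ (eqv w).2 ∈ Y := fun w hw => hw
  have hSconv : Convex ℝ S := by
    intro z₁ h₁ z₂ h₂ a b ha hb hab
    have h' := (hXcv.prod hYcv) (h₁ : eqv z₁ ∈ X ×ˢ Y) (h₂ : eqv z₂ ∈ X ×ˢ Y) ha hb hab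
    show eqv (a • z₁ + b • z₂) ∈ X ×ˢ Y
    simpa [heqv] using h'
  have hdiam2 : ∀ z₁ ∈ S, ∀ z₂ ∈ S, ‖z₁ - z₂‖ ^ 2 ≤ 2 * D ^ 2 := by
    intro z₁ h₁ z₂ h₂
    rw [WithLp.prod_norm_sq_eq_of_L2]
    have e1 : ‖(z₁ - z₂).fst‖ ≤ D := by
      rw [WithLp.sub_fst]
      exact hXD _ (hmemS _ h₁).1 _ (hmemS _ h₂).1
    have e2 : ‖(z₁ - z₂).snd‖ ≤ D := by
      rw [WithLp.sub_snd]
      exact hYD _ (hmemS _ h₁).2 _ (hmemS _ h₂).2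
    nlinarith [norm_nonneg (z₁ - z₂).fst, norm_nonneg (z₁ - z₂).snd]
  have hdiam : ∀ z₁ ∈ S, ∀ z₂ ∈ S, ‖z₁ - z₂‖ ≤ Real.sqrt 2 * D := by
    intro z₁ h₁ z₂ h₂
    have h := Real.sqrt_le_sqrt (hdiam2 z₁ h₁ z₂ h₂)
    rwa [Real.sqrt_sq (norm_nonneg _), show (2:ℝ) * D ^ 2 = (Real.sqrt 2 * D) ^ 2 by
      rw [mul_pow, Real.sq_sqrt (by norm_num : (0:ℝ) ≤ 2)],
      Real.sqrt_sq (by positivity)] at h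
  have hmem : ∀ t, t ≤ T → z t ∈ S := by
    intro t ht
    cases t with
    | zero => exact hz0
    | succ n => exact (hupd n (by omega)).1
  have hmem' : ∀ t, t ≤ T → z' t ∈ S := by
    intro t ht
    cases t with
    | zero => rw [hz0']; exact hz0
    | succ n => exact (hupd' n (by omega)).1
  constructor
  · -- part (i)
    intro x hx y hy
    set w : WithLp 2 (E × E') := eqv.symm (x, y) with hw
    have hwS : w ∈ S := by
      show eqv w ∈ X ×ˢ Y
      rw [hw]; simp only [Equiv.apply_symm_apply]; exact Set.mk_mem_prod hx hy
    set xt : ℕ → E := fun t => (eqv (z t)).1 with hxt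
    set yt : ℕ → E' := fun t => (eqv (z t)).2 with hyt
    have hxtX : ∀ t, t ≤ T → xt t ∈ X := fun t ht => (hmemS _ (hmem t ht)).1
    have hytY : ∀ t, t ≤ T → yt t ∈ Y := fun t ht => (hmemS _ (hmem t ht)).2
    have hgap : ∀ t, t ≤ T → F (xt t, y) - F (x, yt t) ≤ ⟪saddleOp F (z t), z t - w⟫ := by
      intro t ht
      have hxm := hxtX t ht
      have hym := hytY t ht
      have hdiffx : Differentiable ℝ (fun u : E => F (u, yt t)) :=
        hFdiff.comp (differentiable_id.prodMk (differentiable_const _))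
      have hdiffy : Differentiable ℝ (fun v : E' => F (xt t, v)) :=
        hFdiff.comp ((differentiable_const _).prodMk differentiable_id)
      have h1 := convexOn_grad_ineq hdiffx (hcvx (yt t) hym) hxm hx
      have h2 := concaveOn_grad_ineq hdiffy (hccv (xt t) hxm) hym hy
      have hinner : ⟪saddleOp F (z t), z t - w⟫
          = ⟪gradient (fun u : E => F (u, yt t)) (xt t), xt t - x⟫
            - ⟪gradient (fun v : E' => F (xt t, v)) (yt t), yt t - y⟫ := by
        rw [WithLp.prod_inner_apply]
        have e1 : (saddleOp F (z t)).fst = gradient (fun u : E => F (u, yt t)) (xt t) := by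
          simp [saddleOp, hxt, hyt, heqv]
        have e2 : (saddleOp F (z t)).snd = -gradient (fun v : E' => F (xt t, v)) (yt t) := by
          simp [saddleOp, hxt, hyt, heqv]
        have e3 : (z t - w).fst = xt t - x := by
          rw [WithLp.sub_fst]; rw [hw]; rfl
        have e4 : (z t - w).snd = yt t - y := by
          rw [WithLp.sub_snd]; rw [hw]; rfl
        rw [show (saddleOp F (z t)).ofLp.1 = _ from e1, show (saddleOp F (z t)).ofLp.2 = _ from e2,
          show (z t - w).ofLp.1 = _ from e3, show (z t - w).ofLp.2 = _ from e4, inner_neg_left]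
        ring
      rw [hinner]
      simp only [inner_sub_right] at h1 h2 ⊢
      linarith
    have hLδ : ∀ t, t ≤ T → ‖Gt (z t)‖ ^ 2 ≤ 2 * (L ^ 2 + δ ^ 2) := by
      intro t ht
      have h2 := hGt _ (hmem t ht)
      have h3 := hL _ (hmem t ht)
      have h1 : ‖Gt (z t)‖ ≤ L + δ := by
        calc ‖Gt (z t)‖ = ‖(Gt (z t) - saddleOp F (z t)) + saddleOp F (z t)‖ := by
              rw [sub_add_cancel]
          _ ≤ ‖Gt (z t) - saddleOp F (z t)‖ + ‖saddleOp F (z t)‖ := norm_add_le _ _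
          _ ≤ δ + L := add_le_add h2 h3
          _ = L + δ := by ring
      nlinarith [norm_nonneg (Gt (z t)), sq_nonneg (L - δ)]
    have hkey : ∀ t, t < T → ⟪saddleOp F (z t), z t - w⟫ ≤
        (‖z t - w‖ ^ 2 - ‖z (t+1) - w‖ ^ 2) / (2 * α) + α * (L ^ 2 + δ ^ 2)
          + Real.sqrt 2 * δ * D := by
      intro t ht
      have hzt := hmem t ht.le
      have hsqp := proj_sq_le hSconv (hupd t ht) hwS
      have hexpand : ‖(z t - α • Gt (z t)) - w‖ ^ 2
          = ‖z t - w‖ ^ 2 - 2 * α * ⟪Gt (z t), z t - w⟫ + α ^ 2 * ‖Gt (z t)‖ ^ 2 := by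
        have e : (z t - α • Gt (z t)) - w = (z t - w) - α • Gt (z t) := by abel
        rw [e, norm_sub_sq_real, real_inner_smul_right, norm_smul, Real.norm_eq_abs,
          abs_of_pos hα0, real_inner_comm]
        ring
      have h2α : 2 * α * ⟪Gt (z t), z t - w⟫ ≤ ‖z t - w‖ ^ 2 - ‖z (t+1) - w‖ ^ 2
          + α ^ 2 * (2 * (L ^ 2 + δ ^ 2)) := by
        have hl := hLδ t ht.le
        nlinarith [hsqp, hexpand, sq_nonneg α]
      have hinex : ⟪saddleOp F (z t) - Gt (z t), z t - w⟫ ≤ Real.sqrt 2 * δ * D := by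
        calc ⟪saddleOp F (z t) - Gt (z t), z t - w⟫
            ≤ ‖saddleOp F (z t) - Gt (z t)‖ * ‖z t - w‖ := real_inner_le_norm _ _
          _ ≤ δ * (Real.sqrt 2 * D) := by
              apply mul_le_mul ?_ (hdiam _ hzt _ hwS) (norm_nonneg _) hδ
              rw [norm_sub_rev]; exact hGt _ hzt
          _ = Real.sqrt 2 * δ * D := by ring
      have hiden : ⟪saddleOp F (z t), z t - w⟫
          = ⟪Gt (z t), z t - w⟫ + ⟪saddleOp F (z t) - Gt (z t), z t - w⟫ := by
        rw [inner_sub_left]; ring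
      rw [hiden]
      have hdiv : ⟪Gt (z t), z t - w⟫ ≤ (‖z t - w‖ ^ 2 - ‖z (t+1) - w‖ ^ 2) / (2 * α)
          + α * (L ^ 2 + δ ^ 2) := by
        rw [div_add' _ _ _ (by positivity : (2*α) ≠ 0),
          le_div_iff₀ (by positivity : (0:ℝ) < 2*α)]
        nlinarith [h2α]
      linarith [hinex]
    have hsumkey : ∑ t ∈ Finset.range T, ⟪saddleOp F (z t), z t - w⟫ ≤
        D ^ 2 / α + T * (α * (L ^ 2 + δ ^ 2)) + T * (Real.sqrt 2 * δ * D) := by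
      have h1 : ∑ t ∈ Finset.range T, ⟪saddleOp F (z t), z t - w⟫ ≤
          ∑ t ∈ Finset.range T, ((‖z t - w‖ ^ 2 - ‖z (t+1) - w‖ ^ 2) / (2 * α)
            + α * (L ^ 2 + δ ^ 2) + Real.sqrt 2 * δ * D) :=
        Finset.sum_le_sum fun t htm => hkey t (Finset.mem_range.mp htm)
      have h2 : ∑ t ∈ Finset.range T, ((‖z t - w‖ ^ 2 - ‖z (t+1) - w‖ ^ 2) / (2 * α)
            + α * (L ^ 2 + δ ^ 2) + Real.sqrt 2 * δ * D)
          = (‖z 0 - w‖ ^ 2 - ‖z T - w‖ ^ 2) / (2 * α) + T * (α * (L ^ 2 + δ ^ 2))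
            + T * (Real.sqrt 2 * δ * D) := by
        rw [Finset.sum_add_distrib, Finset.sum_add_distrib, ← Finset.sum_div,
          Finset.sum_range_sub' (fun t => ‖z t - w‖ ^ 2), Finset.sum_const,
          Finset.card_range, nsmul_eq_mul, Finset.sum_const, Finset.card_range, nsmul_eq_mul]
      rw [h2] at h1
      refine h1.trans ?_
      have h3 : ‖z 0 - w‖ ^ 2 ≤ 2 * D ^ 2 := hdiam2 _ hz0 _ hwS
      have h4 : 0 ≤ ‖z T - w‖ ^ 2 := sq_nonneg _
      have h5 : (‖z 0 - w‖ ^ 2 - ‖z T - w‖ ^ 2) / (2 * α) ≤ D ^ 2 / α := by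
        rw [div_le_div_iff₀ (by positivity) (by positivity)]
        nlinarith
      linarith
    set zbar := (T:ℝ)⁻¹ • ∑ t ∈ Finset.range T, z t with hzbar
    have hfst : (eqv zbar).1 = ∑ t ∈ Finset.range T, (T:ℝ)⁻¹ • xt t := by
      have e0 : (eqv zbar).1 = ((LinearMap.fst ℝ E E').comp
          (WithLp.linearEquiv 2 ℝ (E × E')).toLinearMap) zbar := rfl
      rw [e0, hzbar, map_smul, map_sum, Finset.smul_sum]
      rfl
    have hsnd : (eqv zbar).2 = ∑ t ∈ Finset.range T, (T:ℝ)⁻¹ • yt t := by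
      have e0 : (eqv zbar).2 = ((LinearMap.snd ℝ E E').comp
          (WithLp.linearEquiv 2 ℝ (E × E')).toLinearMap) zbar := rfl
      rw [e0, hzbar, map_smul, map_sum, Finset.smul_sum]
      rfl
    have hwm : ∑ _t ∈ Finset.range T, (T:ℝ)⁻¹ = 1 := by
      rw [Finset.sum_const, Finset.card_range, nsmul_eq_mul]
      field_simp
    have hJx : F ((eqv zbar).1, y) ≤ ∑ t ∈ Finset.range T, (T:ℝ)⁻¹ * F (xt t, y) := by
      rw [hfst]
      have := (hcvx y hy).map_sum_le (fun t _ => by positivity) hwm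
        (fun t htm => hxtX t (Finset.mem_range.mp htm).le)
      simpa using this
    have hJy : ∑ t ∈ Finset.range T, (T:ℝ)⁻¹ * F (x, yt t) ≤ F (x, (eqv zbar).2) := by
      rw [hsnd]
      have := (hccv x hx).le_map_sum (fun t _ => by positivity) hwm
        (fun t htm => hytY t (Finset.mem_range.mp htm).le)
      simpa using this
    calc F ((eqv zbar).1, y) - F (x, (eqv zbar).2)
        ≤ (∑ t ∈ Finset.range T, (T:ℝ)⁻¹ * F (xt t, y))
          - ∑ t ∈ Finset.range T, (T:ℝ)⁻¹ * F (x, yt t) := by linarith [hJx, hJy]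
      _ = (T:ℝ)⁻¹ * ∑ t ∈ Finset.range T, (F (xt t, y) - F (x, yt t)) := by
          rw [Finset.mul_sum, ← Finset.sum_sub_distrib]
          exact Finset.sum_congr rfl fun t _ => by ring
      _ ≤ (T:ℝ)⁻¹ * ∑ t ∈ Finset.range T, ⟪saddleOp F (z t), z t - w⟫ := by
          refine mul_le_mul_of_nonneg_left ?_ (by positivity)
          exact Finset.sum_le_sum fun t htm => hgap t (Finset.mem_range.mp htm).le
      _ ≤ (T:ℝ)⁻¹ * (D ^ 2 / α + T * (α * (L ^ 2 + δ ^ 2)) + T * (Real.sqrt 2 * δ * D)) :=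
          mul_le_mul_of_nonneg_left hsumkey (by positivity)
      _ = D ^ 2 / (α * T) + α * (L ^ 2 + δ ^ 2) + Real.sqrt 2 * δ * D := by
          field_simp
      _ = ℓ * D ^ 2 / Real.sqrt T + (L ^ 2 + δ ^ 2) / (ℓ * Real.sqrt T)
          + Real.sqrt 2 * δ * D := by
          have e1 : α * T = Real.sqrt T / ℓ := by
            field_simp [hα]
            rw [hα]; field_simp; linear_combination -hss
          have e2 : D ^ 2 / (α * T) = ℓ * D ^ 2 / Real.sqrt T := by
            rw [e1, div_div_eq_mul_div]; ring
          have e3 : α * (L ^ 2 + δ ^ 2) = (L ^ 2 + δ ^ 2) / (ℓ * Real.sqrt T) := by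
            rw [hα]; ring
          rw [e2, e3]

  · -- part (ii)
    set c := Real.sqrt (1 + 1 / T) with hc
    have hc1 : (1:ℝ) ≤ c := by
      have h1T : (0:ℝ) < 1 / T := by positivity
      have h := Real.sqrt_le_sqrt (show (1:ℝ) ≤ 1 + 1 / T by linarith)
      rw [Real.sqrt_one] at h
      exact h.trans_eq hc.symm
    have hcexp : c ≤ Real.exp (1 / (2 * T)) := by
      have h1 : (1:ℝ) + 1 / T ≤ Real.exp (1 / T) := by
        have := Real.add_one_le_exp (1 / (T:ℝ)); linarith
      rw [hc, show (1:ℝ) / (2 * T) = (1 / T) / 2 by ring, Real.exp_half]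
      exact Real.sqrt_le_sqrt h1
    have hck : ∀ k ≤ T, c ^ k ≤ Real.sqrt (Real.exp 1) := by
      intro k hk
      calc c ^ k ≤ Real.exp (1 / (2 * T)) ^ k :=
            pow_le_pow_left₀ (hc ▸ Real.sqrt_nonneg _) hcexp k
        _ = Real.exp (k * (1 / (2 * T))) := by rw [← Real.exp_nat_mul]
        _ ≤ Real.exp (1 / 2) := by
            apply Real.exp_le_exp.mpr
            have hkT : (k:ℝ) ≤ T := by exact_mod_cast hk
            rw [mul_one_div, div_le_div_iff₀ (by positivity) (by norm_num)]
            nlinarith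
        _ = Real.sqrt (Real.exp 1) := by
            rw [← Real.exp_half]
    have hstep : ∀ t < T, ‖z (t+1) - z' (t+1)‖ ≤ c * ‖z t - z' t‖ + 2 * α * δ := by
      intro t ht
      have hzt := hmem t ht.le
      have hzt' := hmem' t ht.le
      have hne := proj_nonexpansive hSconv (hupd t ht) (hupd' t ht)
      set u := z t - z' t with hu
      set a := Gt (z t) - saddleOp F (z t) with ha
      set b := Gt' (z' t) - saddleOp F (z' t) with hb
      set g := saddleOp F (z t) - saddleOp F (z' t) with hg
      have hdecomp : (z t - α • Gt (z t)) - (z' t - α • Gt' (z' t))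
          = ((u - α • g) - α • a) + α • b := by
        rw [hu, ha, hb, hg, smul_sub, smul_sub, smul_sub]; abel
      have h1 : ‖u - α • g‖ ≤ c * ‖u‖ := by
        have hgnorm : ‖g‖ ≤ ℓ * ‖u‖ := hlip _ hzt _ hzt'
        have hinner : 0 ≤ ⟪u, α • g⟫ := by
          rw [real_inner_smul_right, real_inner_comm]
          exact mul_nonneg hα0.le (hmono _ hzt _ hzt')
        have hsq : ‖u - α • g‖ ^ 2 ≤ (1 + 1 / T) * ‖u‖ ^ 2 := by
          rw [norm_sub_sq_real, norm_smul, Real.norm_eq_abs, abs_of_pos hα0]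
          have h2 : (α * ‖g‖) ^ 2 ≤ α ^ 2 * (ℓ * ‖u‖) ^ 2 := by
            have := mul_le_mul_of_nonneg_left hgnorm hα0.le
            nlinarith [mul_le_mul hgnorm hgnorm (norm_nonneg g) (by positivity), sq_nonneg α]
          nlinarith [hα2, norm_nonneg u, sq_nonneg ‖u‖]
        have := Real.sqrt_le_sqrt hsq
        rwa [Real.sqrt_sq (norm_nonneg _), Real.sqrt_mul (by positivity) (‖u‖ ^ 2),
          Real.sqrt_sq (norm_nonneg _), ← hc] at this
      have ha' : ‖α • a‖ ≤ α * δ := by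
        rw [norm_smul, Real.norm_eq_abs, abs_of_pos hα0]
        exact mul_le_mul_of_nonneg_left (hGt _ hzt) hα0.le
      have hb' : ‖α • b‖ ≤ α * δ := by
        rw [norm_smul, Real.norm_eq_abs, abs_of_pos hα0]
        exact mul_le_mul_of_nonneg_left (hGt' _ hzt') hα0.le
      calc ‖z (t+1) - z' (t+1)‖
          ≤ ‖(z t - α • Gt (z t)) - (z' t - α • Gt' (z' t))‖ := hne
        _ = ‖((u - α • g) - α • a) + α • b‖ := by rw [hdecomp]
        _ ≤ ‖(u - α • g) - α • a‖ + ‖α • b‖ := norm_add_le _ _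
        _ ≤ (‖u - α • g‖ + ‖α • a‖) + ‖α • b‖ := by
            exact add_le_add_left (norm_sub_le _ _) _
        _ ≤ (c * ‖u‖ + α * δ) + α * δ := by
            exact add_le_add (add_le_add h1 ha') hb'
        _ = c * ‖u‖ + 2 * α * δ := by ring
    have hr : ∀ t, t ≤ T → ‖z t - z' t‖ ≤ 2 * α * δ * ∑ k ∈ Finset.range t, c ^ k := by
      intro t
      induction t with
      | zero => intro _; simp [hz0']
      | succ n ih =>
        intro hn
        have hn' : n ≤ T := by omega
        have h1 := hstep n (by omega)
        have h2 := ih hn'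
        have hc0 : (0:ℝ) < c := lt_of_lt_of_le one_pos hc1
        calc ‖z (n+1) - z' (n+1)‖ ≤ c * ‖z n - z' n‖ + 2 * α * δ := h1
          _ ≤ c * (2 * α * δ * ∑ k ∈ Finset.range n, c ^ k) + 2 * α * δ := by
              exact add_le_add_left (mul_le_mul_of_nonneg_left h2 hc0.le) _
          _ = 2 * α * δ * ∑ k ∈ Finset.range (n+1), c ^ k := by
              rw [geom_sum_succ]; ring
    have hrt : ∀ t, t ≤ T → ‖z t - z' t‖ ≤ 2 * α * δ * (t * Real.sqrt (Real.exp 1)) := by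
      intro t ht
      refine (hr t ht).trans ?_
      have hsum : ∑ k ∈ Finset.range t, c ^ k ≤ t * Real.sqrt (Real.exp 1) := by
        calc ∑ k ∈ Finset.range t, c ^ k
            ≤ ∑ _k ∈ Finset.range t, Real.sqrt (Real.exp 1) :=
              Finset.sum_le_sum fun k hk =>
                hck k (le_trans (Finset.mem_range.mp hk).le ht)
          _ = t * Real.sqrt (Real.exp 1) := by
              rw [Finset.sum_const, Finset.card_range, nsmul_eq_mul]
      exact mul_le_mul_of_nonneg_left hsum (by positivity)
    have hnormavg : ‖(T : ℝ)⁻¹ • ∑ t ∈ Finset.range T, z t -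
        (T : ℝ)⁻¹ • ∑ t ∈ Finset.range T, z' t‖ ≤ α * δ * Real.sqrt (Real.exp 1) * T := by
      have hrw : (T : ℝ)⁻¹ • ∑ t ∈ Finset.range T, z t -
          (T : ℝ)⁻¹ • ∑ t ∈ Finset.range T, z' t
          = (T : ℝ)⁻¹ • ∑ t ∈ Finset.range T, (z t - z' t) := by
        rw [Finset.sum_sub_distrib, smul_sub]
      rw [hrw, norm_smul, Real.norm_eq_abs, abs_of_pos (by positivity)]
      have hnsum : ‖∑ t ∈ Finset.range T, (z t - z' t)‖ ≤
          ∑ t ∈ Finset.range T, (2 * α * δ * (t * Real.sqrt (Real.exp 1))) :=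
        (norm_sum_le _ _).trans (Finset.sum_le_sum fun t htm =>
          hrt t (Finset.mem_range.mp htm).le)
      have hgauss : ∑ t ∈ Finset.range T, (t:ℝ) ≤ T * T / 2 := by
        have key : ∀ n : ℕ, (∑ t ∈ Finset.range n, (t:ℝ)) ≤ n * n / 2 := by
          intro n
          induction n with
          | zero => simp
          | succ m ih =>
            rw [Finset.sum_range_succ]
            push_cast
            nlinarith [ih]
        exact key T
      have hsum2 : ∑ t ∈ Finset.range T, (2 * α * δ * (t * Real.sqrt (Real.exp 1)))
          ≤ α * δ * Real.sqrt (Real.exp 1) * T * T := by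
        have : ∑ t ∈ Finset.range T, (2 * α * δ * (t * Real.sqrt (Real.exp 1)))
            = 2 * α * δ * Real.sqrt (Real.exp 1) * ∑ t ∈ Finset.range T, (t:ℝ) := by
          rw [Finset.mul_sum]; congr 1; ext t; ring
        rw [this]
        have h2 := mul_le_mul_of_nonneg_left hgauss
          (show (0:ℝ) ≤ 2 * α * δ * Real.sqrt (Real.exp 1) by positivity)
        nlinarith [h2]
      calc (T:ℝ)⁻¹ * ‖∑ t ∈ Finset.range T, (z t - z' t)‖
          ≤ (T:ℝ)⁻¹ * (α * δ * Real.sqrt (Real.exp 1) * T * T) := by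
            exact mul_le_mul_of_nonneg_left (hnsum.trans hsum2) (by positivity)
        _ = α * δ * Real.sqrt (Real.exp 1) * T := by field_simp
    have hfin := pow_le_pow_left₀ (norm_nonneg _) hnormavg 2
    refine hfin.trans ?_
    have hexp1 : Real.sqrt (Real.exp 1) ^ 2 = Real.exp 1 := Real.sq_sqrt (Real.exp_pos 1).le
    have hα2' : α ^ 2 = 1 / (ℓ ^ 2 * T) := by
      have hl2 : (0:ℝ) < ℓ ^ 2 := by positivity
      field_simp at hα2 ⊢
      nlinarith [hα2]
    calc (α * δ * Real.sqrt (Real.exp 1) * T) ^ 2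
        = α ^ 2 * δ ^ 2 * (Real.sqrt (Real.exp 1)) ^ 2 * T ^ 2 := by ring
      _ = 1 / (ℓ ^ 2 * T) * δ ^ 2 * Real.exp 1 * T ^ 2 := by rw [hα2', hexp1]
      _ = Real.exp 1 / ℓ ^ 2 * δ ^ 2 * T := by
          field_simp
      _ ≤ 4 * Real.exp 1 / (3 * ℓ ^ 2) * δ ^ 2 * T := by
          have hco : Real.exp 1 / ℓ ^ 2 ≤ 4 * Real.exp 1 / (3 * ℓ ^ 2) := by
            rw [div_le_div_iff₀ (by positivity) (by positivity)]
            nlinarith [Real.exp_pos 1, sq_nonneg ℓ, mul_pos hℓ hℓ]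
          have : (0:ℝ) ≤ δ ^ 2 * T := by positivity
          nlinarith [mul_le_mul_of_nonneg_right hco this]
end
end
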